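/- If K : T^{2d} → ℝ^d has summable Fourier coefficients, ‖K̂‖_{l^1} = Σ_{λ,η} |K̂(λ,η)| < ∞, then for any finite index set P with k, l ∈ P, the operator |∇_k|^{-1} S_{k,l} maps the space of functions with bounded Fourier coefficients to itself with ‖|∇_k|^{-1} S_{k,l} h‖_{l̂^∞} ≤ ‖K̂‖_{l^1} ‖h‖_{l̂^∞}. -/

import Mathlib

open MeasureTheory Finset

instance : Fact (0 < (1:ℝ)) := ⟨one_pos⟩

/-- The Fourier coefficient of a function on the torus `(ℝ/ℤ)^ι` at the
frequency `ξ ∈ ℤ^ι`. -/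
noncomputable def mFourierCoeff {ι : Type*} [Fintype ι]
    (f : (ι → AddCircle (1:ℝ)) → ℂ) (ξ : ι → ℤ) : ℂ :=
  ∫ x : ι → AddCircle (1:ℝ), (∏ i, fourier (-(ξ i)) (x i)) * f x

/-- Cauchy-Schwarz for sums, sqrt version. -/
lemma cs_sqrt {n : Type*} [Fintype n] (f g : n → ℝ) (hf : ∀ i, 0 ≤ f i) (hg : ∀ i, 0 ≤ g i) :
    ∑ i, f i * g i ≤ Real.sqrt (∑ i, f i ^ 2) * Real.sqrt (∑ i, g i ^ 2) := by
  have h1 : (∑ i, f i * g i) ^ 2 ≤ (∑ i, f i ^ 2) * ∑ i, g i ^ 2 :=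
    sum_mul_sq_le_sq_mul_sq univ f g
  have h0 : 0 ≤ ∑ i, f i * g i := Finset.sum_nonneg fun i _ => mul_nonneg (hf i) (hg i)
  calc ∑ i, f i * g i = Real.sqrt ((∑ i, f i * g i) ^ 2) := (Real.sqrt_sq h0).symm
    _ ≤ Real.sqrt ((∑ i, f i ^ 2) * ∑ i, g i ^ 2) := Real.sqrt_le_sqrt h1
    _ = _ := Real.sqrt_mul (Finset.sum_nonneg fun i _ => sq_nonneg _) _

/-- If `K : 𝕋^{2d} → ℝ^d` has summable Fourier coefficients,
`‖K̂‖_{l¹} = Σ_{λ,η} |K̂(λ,η)| < ∞`, then for a finite index set `ι ∋ k, l` the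
operator `|∇_k|⁻¹ S_{k,l}` maps functions with bounded Fourier coefficients to
themselves, with `‖|∇_k|⁻¹ S_{k,l} h‖_{l̂^∞} ≤ ‖K̂‖_{l¹} ‖h‖_{l̂^∞}`: each
Fourier coefficient of `|∇_k|⁻¹ S_{k,l} h` is bounded by `‖K̂‖_{l¹} M` whenever
`M` bounds all Fourier coefficients of `h`. -/
theorem stmt5 (d : ℕ) (ι : Type*) [Fintype ι] [DecidableEq ι] (k l : ι)
    (K : ((Fin d ⊕ Fin d) → AddCircle (1:ℝ)) → EuclideanSpace ℝ (Fin d))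
    (hK : Summable fun p : (Fin d → ℤ) × (Fin d → ℤ) =>
      Real.sqrt (∑ j, ‖mFourierCoeff (fun y => ((K y j : ℝ) : ℂ)) (Sum.elim p.1 p.2)‖ ^ 2))
    (h : ((ι × Fin d) → AddCircle (1:ℝ)) → ℂ)
    (M : ℝ) (hM : ∀ ζ : (ι × Fin d) → ℤ, ‖mFourierCoeff h ζ‖ ≤ M) :
    ∀ ξ : (ι × Fin d) → ℤ,
      ‖if ∀ j, ξ (k, j) = 0 then 0 else
          ((1 / Real.sqrt (∑ j, (2 * Real.pi * (ξ (k, j) : ℝ)) ^ 2) : ℝ) : ℂ) *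
            ∑' p : (Fin d → ℤ) × (Fin d → ℤ),
              ∑ j, (2 * Real.pi * Complex.I * (ξ (k, j) : ℂ)) *
                mFourierCoeff (fun y => ((K y j : ℝ) : ℂ)) (Sum.elim p.1 p.2) *
                mFourierCoeff h (fun q =>
                  ξ q - (if q.1 = k then p.1 q.2 else 0) -
                    (if q.1 = l then p.2 q.2 else 0))‖
        ≤ (∑' p : (Fin d → ℤ) × (Fin d → ℤ),
            Real.sqrt (∑ j, ‖mFourierCoeff (fun y => ((K y j : ℝ) : ℂ))
              (Sum.elim p.1 p.2)‖ ^ 2)) * M := by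
  intro ξ
  have hM0 : 0 ≤ M := le_trans (norm_nonneg _) (hM 0)
  set g : (Fin d → ℤ) × (Fin d → ℤ) → ℝ := fun p =>
    Real.sqrt (∑ j, ‖mFourierCoeff (fun y => ((K y j : ℝ) : ℂ)) (Sum.elim p.1 p.2)‖ ^ 2)
    with hg
  have hg0 : ∀ p, 0 ≤ g p := fun p => Real.sqrt_nonneg _
  have htsum0 : 0 ≤ ∑' p, g p := tsum_nonneg hg0
  by_cases hz : ∀ j, ξ (k, j) = 0
  · rw [if_pos hz, norm_zero]
    exact mul_nonneg htsum0 hM0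
  · rw [if_neg hz]
    push_neg at hz
    obtain ⟨j0, hj0⟩ := hz
    set A : ℝ := Real.sqrt (∑ j, (2 * Real.pi * (ξ (k, j) : ℝ)) ^ 2) with hA
    have hApos : 0 < A := by
      apply Real.sqrt_pos.2
      apply Finset.sum_pos' (fun j _ => sq_nonneg _)
      refine ⟨j0, Finset.mem_univ _, ?_⟩
      have : (ξ (k, j0) : ℝ) ≠ 0 := Int.cast_ne_zero.2 hj0
      positivity
    set F : (Fin d → ℤ) × (Fin d → ℤ) → ℂ := fun p =>
      ∑ j, (2 * Real.pi * Complex.I * (ξ (k, j) : ℂ)) *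
        mFourierCoeff (fun y => ((K y j : ℝ) : ℂ)) (Sum.elim p.1 p.2) *
        mFourierCoeff h (fun q =>
          ξ q - (if q.1 = k then p.1 q.2 else 0) - (if q.1 = l then p.2 q.2 else 0))
      with hF
    have hFbound : ∀ p, ‖F p‖ ≤ A * (g p * M) := by
      intro p
      calc ‖F p‖ ≤ ∑ j, ‖(2 * Real.pi * Complex.I * (ξ (k, j) : ℂ)) *
            mFourierCoeff (fun y => ((K y j : ℝ) : ℂ)) (Sum.elim p.1 p.2) *
            mFourierCoeff h (fun q =>
              ξ q - (if q.1 = k then p.1 q.2 else 0) - (if q.1 = l then p.2 q.2 else 0))‖ :=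
          norm_sum_le _ _
        _ ≤ ∑ j, (‖(2 * Real.pi * Complex.I * (ξ (k, j) : ℂ))‖ *
              ‖mFourierCoeff (fun y => ((K y j : ℝ) : ℂ)) (Sum.elim p.1 p.2)‖) * M := by
          apply Finset.sum_le_sum
          intro j _
          rw [norm_mul, norm_mul]
          gcongr
          exact hM _
        _ = (∑ j, ‖(2 * Real.pi * Complex.I * (ξ (k, j) : ℂ))‖ *
              ‖mFourierCoeff (fun y => ((K y j : ℝ) : ℂ)) (Sum.elim p.1 p.2)‖) * M := by
          rw [Finset.sum_mul]
        _ ≤ (A * g p) * M := by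
          apply mul_le_mul_of_nonneg_right _ hM0
          have := cs_sqrt (fun j => ‖(2 * Real.pi * Complex.I * (ξ (k, j) : ℂ))‖)
            (fun j => ‖mFourierCoeff (fun y => ((K y j : ℝ) : ℂ)) (Sum.elim p.1 p.2)‖)
            (fun j => norm_nonneg _) (fun j => norm_nonneg _)
          refine le_trans this ?_
          apply mul_le_mul_of_nonneg_right _ (Real.sqrt_nonneg _)
          rw [hA]
          apply le_of_eq
          congr 1
          apply Finset.sum_congr rfl
          intro j _
          show ‖(2 * Real.pi * Complex.I * (ξ (k, j) : ℂ))‖ ^ 2 = _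
          rw [show (2 * Real.pi * Complex.I * (ξ (k, j) : ℂ)) =
              ((2 * Real.pi * (ξ (k, j) : ℝ) : ℝ) : ℂ) * Complex.I by push_cast; ring]
          rw [norm_mul, Complex.norm_I, mul_one, Complex.norm_real, Real.norm_eq_abs, sq_abs]
        _ = A * (g p * M) := by ring
    have hGsum : Summable (fun p => A * (g p * M)) :=
      ((hK.mul_right M).mul_left A)
    have hFsum : Summable F := Summable.of_norm_bounded hGsum hFbound
    calc ‖((1 / A : ℝ) : ℂ) * ∑' p, F p‖ = (1 / A) * ‖∑' p, F p‖ := by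
          rw [norm_mul, Complex.norm_real, Real.norm_of_nonneg (by positivity)]
      _ ≤ (1 / A) * ∑' p, ‖F p‖ := by
          apply mul_le_mul_of_nonneg_left (norm_tsum_le_tsum_norm hFsum.norm) (by positivity)
      _ ≤ (1 / A) * ∑' p, A * (g p * M) := by
          apply mul_le_mul_of_nonneg_left _ (by positivity)
          exact Summable.tsum_le_tsum hFbound hFsum.norm hGsum
      _ = (∑' p, g p) * M := by
          rw [tsum_mul_left, tsum_mul_right]
          field_simp
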